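/- arXiv:2512.22805 — 3 statements merged into one kernel-verified Lean document; each statement's English description precedes it below -/
import Mathlib

section
/- Let G be a graph containing a triangle u–v–w with d(u) = 2 and d(v) = 3, and let L be a list assignment with |L(z)| = d(z) + 2 for all z. Then any proper conflict-free L-coloring of G − u extends to a proper conflict-free L-coloring of G, provided w is not isolated in G − u. -/
/-- A proper conflict-free coloring of `G`. -/
def IsPCF {V β : Type*} (G : SimpleGraph V) (φ : V → β) : Prop :=
  (∀ ⦃a b : V⦄, G.Adj a b → φ a ≠ φ b) ∧
  ∀ v : V, (∃ u, G.Adj v u) → ∃ c : β, ∃! u : V, G.Adj v u ∧ φ u = c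

/-- A proper conflict-free coloring from the lists `L`. -/
def IsPCFList {V : Type*} (G : SimpleGraph V) (L : V → Finset ℕ) (φ : V → ℕ) : Prop :=
  (∀ v, φ v ∈ L v) ∧ IsPCF G φ

/-- The graph obtained from `G` by deleting the vertices in `S`
(kept on the same vertex type; deleted vertices become isolated). -/
def delVerts {V : Type*} (G : SimpleGraph V) (S : Set V) : SimpleGraph V where
  Adj a b := G.Adj a b ∧ a ∉ S ∧ b ∉ S
  symm := by
    constructor
    intro a b h
    exact ⟨h.1.symm, h.2.2, h.2.1⟩
  loopless := by
    constructor
    intro a h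
    exact G.irrefl h.1

/-- `Uset G φ v` is the set of colors appearing exactly once in the open
neighborhood of `v` in `G` under the coloring `φ`. -/
def Uset {V : Type*} (G : SimpleGraph V) (φ : V → ℕ) (v : V) : Set ℕ :=
  {c | ∃! u : V, G.Adj v u ∧ φ u = c}

/-- A triangle `u–v–w` with `d(u) = 2` and `d(v) = 3`: any PCF coloring of `G - u`
extends to a PCF coloring of `G` from lists of size degree + 2, provided `w` is not
isolated in `G - u`. -/
theorem stmt10 {V : Type*} [Fintype V] [DecidableEq V] (G : SimpleGraph V)
    [DecidableRel G.Adj] (u v w : V) (L : V → Finset ℕ) (φ : V → ℕ)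
    (huv : G.Adj u v) (huw : G.Adj u w) (hvw : G.Adj v w)
    (hdu : G.degree u = 2) (hdv : G.degree v = 3)
    (hL : ∀ z, (L z).card = G.degree z + 2)
    (hφ : IsPCF (delVerts G {u}) φ)
    (hφL : ∀ z, z ≠ u → φ z ∈ L z)
    (hwiso : ∃ z, (delVerts G {u}).Adj w z) :
    ∃ ψ : V → ℕ, (∀ z, z ≠ u → ψ z = φ z) ∧ IsPCFList G L ψ := by
  classical
  have hvu : v ≠ u := fun h => G.loopless.irrefl u (h ▸ huv)
  have hwu : w ≠ u := fun h => G.loopless.irrefl u (h ▸ huw)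
  have hvw' : v ≠ w := G.ne_of_adj hvw
  have hGvw : (delVerts G {u}).Adj v w := ⟨hvw, hvu, hwu⟩
  -- neighbors of u are exactly {v, w}
  have hNu : G.neighborFinset u = {v, w} := by
    refine (Finset.eq_of_subset_of_card_le ?_ ?_).symm
    · intro z hz
      simp only [Finset.mem_insert, Finset.mem_singleton] at hz
      rcases hz with h | h
      · rw [h]; simpa using huv
      · rw [h]; simpa using huw
    · rw [G.card_neighborFinset_eq_degree, hdu, Finset.card_insert_of_notMem (by simpa using hvw'), Finset.card_singleton]
  have hAdjU : ∀ z, G.Adj u z ↔ z = v ∨ z = w := by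
    intro z
    rw [← SimpleGraph.mem_neighborFinset, hNu]
    simp
  -- neighbors of v
  have huvmem : ({u, w} : Finset V) ⊆ G.neighborFinset v := by
    intro z hz
    simp only [Finset.mem_insert, Finset.mem_singleton] at hz
    rcases hz with h | h
    · rw [h]; simpa using huv.symm
    · rw [h]; simpa using hvw
  have hcard2 : ({u, w} : Finset V).card = 2 := by
    rw [Finset.card_insert_of_notMem (by simpa using hwu.symm), Finset.card_singleton]
  have hsd : (G.neighborFinset v \ {u, w}).card = 1 := by
    rw [Finset.card_sdiff_of_subset huvmem, G.card_neighborFinset_eq_degree, hdv, hcard2]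
  obtain ⟨x, hx⟩ := Finset.card_eq_one.1 hsd
  have hxmem : x ∈ G.neighborFinset v \ ({u, w} : Finset V) := by rw [hx]; simp
  have hxadj : G.Adj v x := (SimpleGraph.mem_neighborFinset (G := G) (v := v) x).1 (Finset.mem_sdiff.1 hxmem).1
  have hxu : x ≠ u := by
    have := (Finset.mem_sdiff.1 hxmem).2; simp at this; exact this.1
  have hxw : x ≠ w := by
    have := (Finset.mem_sdiff.1 hxmem).2; simp at this; exact this.2
  have hNv : G.neighborFinset v = {u, w, x} := by
    have h1 : G.neighborFinset v = (G.neighborFinset v \ {u, w}) ∪ {u, w} :=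
      (Finset.sdiff_union_of_subset huvmem).symm
    rw [h1, hx]
    ext z; simp [or_comm, or_assoc, or_left_comm]
  have hAdjV : ∀ z, G.Adj v z ↔ z = u ∨ z = w ∨ z = x := by
    intro z
    rw [← SimpleGraph.mem_neighborFinset, hNv]
    simp
  -- unique color at w in G - u
  obtain ⟨cw, y, ⟨hwy, hycw⟩, hyuniq⟩ := hφ.2 w hwiso
  -- choose the color c for u
  have hLu : (L u).card = 4 := by rw [hL u, hdu]
  have hns : ¬ (L u ⊆ {φ v, φ w, cw}) := by
    intro hsub
    have := Finset.card_le_card hsub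
    have h3 : ({φ v, φ w, cw} : Finset ℕ).card ≤ 3 := by
      refine le_trans (Finset.card_insert_le _ _) ?_
      refine Nat.succ_le_succ (le_trans (Finset.card_insert_le _ _) ?_)
      simp
    omega
  obtain ⟨c, hcL, hcnot⟩ := Finset.not_subset.1 hns
  simp only [Finset.mem_insert, Finset.mem_singleton, not_or] at hcnot
  obtain ⟨hcv, hcw2, hccw⟩ := hcnot
  set ψ : V → ℕ := Function.update φ u c with hψ
  have hψu : ψ u = c := Function.update_self u c φ
  have hψz : ∀ z, z ≠ u → ψ z = φ z := fun z hz => Function.update_of_ne hz c φ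
  refine ⟨ψ, hψz, ?_, ?_, ?_⟩
  · -- list membership
    intro z
    by_cases hz : z = u
    · subst hz; rw [hψu]; exact hcL
    · rw [hψz z hz]; exact hφL z hz
  · -- properness
    intro a b hab
    by_cases ha : a = u
    · subst ha
      rw [hψu, hψz b (G.ne_of_adj hab).symm]
      rcases (hAdjU b).1 hab with h | h
      · rw [h]; exact hcv
      · rw [h]; exact hcw2
    · by_cases hb : b = u
      · subst hb
        rw [hψu, hψz a ha]
        rcases (hAdjU a).1 hab.symm with h | h
        · rw [h]; exact fun h => hcv h.symm
        · rw [h]; exact fun h => hcw2 h.symm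
      · rw [hψz a ha, hψz b hb]
        exact hφ.1 ⟨hab, ha, hb⟩
  · -- conflict-freeness
    intro z hz
    by_cases hzu : z = u
    · subst hzu
      refine ⟨φ v, v, ⟨huv, hψz v hvu⟩, ?_⟩
      rintro y' ⟨hy', hy'c⟩
      rcases (hAdjU y').1 hy' with h | h
      · exact h
      · exfalso
        rw [h, hψz w hwu] at hy'c
        exact hφ.1 hGvw hy'c.symm
    by_cases hzv : z = v
    · subst hzv
      have hψw : ψ w = φ w := hψz w hwu
      have hψx : ψ x = φ x := hψz x hxu
      by_cases hcx : c = φ x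
      · -- φ w is the unique color (via w)
        refine ⟨φ w, w, ⟨hvw, hψw⟩, ?_⟩
        rintro y' ⟨hy', hy'c⟩
        rcases (hAdjV y').1 hy' with h | h | h
        · exfalso; rw [h, hψu] at hy'c; exact hcw2 hy'c
        · exact h
        · exfalso; rw [h, hψx, ← hcx] at hy'c; exact hcw2 hy'c
      · -- c is the unique color (via u)
        refine ⟨c, u, ⟨huv.symm, hψu⟩, ?_⟩
        rintro y' ⟨hy', hy'c⟩
        rcases (hAdjV y').1 hy' with h | h | h
        · exact h
        · exfalso; rw [h, hψw] at hy'c; exact hcw2 hy'c.symm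
        · exfalso; rw [h, hψx] at hy'c; exact hcx hy'c.symm
    by_cases hzw : z = w
    · subst hzw
      have hyu : y ≠ u := fun h => hwy.2.2 (by rw [h]; rfl)
      refine ⟨cw, y, ⟨hwy.1, by rw [hψz y hyu]; exact hycw⟩, ?_⟩
      rintro y' ⟨hy', hy'c⟩
      by_cases hy'u : y' = u
      · exfalso; rw [hy'u, hψu] at hy'c; exact hccw hy'c
      · rw [hψz y' hy'u] at hy'c
        exact hyuniq y' ⟨⟨hy', hwu, hy'u⟩, hy'c⟩
    · -- z not in {u, v, w}
      have hnbr : ∀ y', G.Adj z y' → y' ≠ u := by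
        intro y' hy' h
        subst h
        rcases (hAdjU z).1 hy'.symm with h | h
        · exact hzv h
        · exact hzw h
      obtain ⟨y0, hy0⟩ := hz
      have : ∃ t, (delVerts G {u}).Adj z t := ⟨y0, hy0, hzu, hnbr y0 hy0⟩
      obtain ⟨cz, t, ⟨hzt, htcz⟩, htuniq⟩ := hφ.2 z this
      have htu : t ≠ u := fun h => hzt.2.2 (by rw [h]; rfl)
      refine ⟨cz, t, ⟨hzt.1, by rw [hψz t htu]; exact htcz⟩, ?_⟩
      rintro y' ⟨hy', hy'c⟩
      have hy'u : y' ≠ u := hnbr y' hy'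
      rw [hψz y' hy'u] at hy'c
      exact htuniq y' ⟨⟨hy', hzu, hy'u⟩, hy'c⟩
end

section
/- Let G be a graph containing a triangle u–x–y with d(u) = 2, let L be a list assignment with |L(z)| = d(z) + 2 for all z, and let φ be a proper conflict-free L-coloring of G − u. If |U_φ(x, G−u)| ≥ 3 or |U_φ(y, G−u)| ≥ 3, or |L(u)| > 4, or L(u) ≠ {φ(x), φ(y), α, β} where U_φ(x,G−u) = {α} and U_φ(y,G−u) = {β}, then φ extends to a proper conflict-free L-coloring of G by coloring only u. -/
lemma extend_pcf {V : Type*} [Fintype V] [DecidableEq V] (G : SimpleGraph V)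
    [DecidableRel G.Adj] (u x y : V) (L : V → Finset ℕ) (φ : V → ℕ)
    (hux : G.Adj u x) (huy : G.Adj u y) (hxy : G.Adj x y)
    (hdu : G.degree u = 2)
    (hφ : IsPCF (delVerts G {u}) φ)
    (hφL : ∀ z, z ≠ u → φ z ∈ L z)
    (c : ℕ) (hcL : c ∈ L u) (hcx : c ≠ φ x) (hcy : c ≠ φ y)
    (hax : ∃ α ∈ Uset (delVerts G {u}) φ x, α ≠ c)
    (hay : ∃ β ∈ Uset (delVerts G {u}) φ y, β ≠ c) :
    IsPCFList G L (Function.update φ u c) := by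
  have hxu : x ≠ u := hux.ne'
  have hyu : y ≠ u := huy.ne'
  have hxyne : x ≠ y := hxy.ne
  set φ' := Function.update φ u c with hφ'
  have hupd : ∀ z, z ≠ u → φ' z = φ z := fun z hz => Function.update_of_ne hz _ _
  have hupdu : φ' u = c := Function.update_self _ _ _
  -- neighbors of u are exactly x and y
  have hNu : G.neighborFinset u = {x, y} := by
    refine (Finset.eq_of_subset_of_card_le ?_ ?_).symm
    · intro z hz
      simp only [Finset.mem_insert, Finset.mem_singleton] at hz
      rcases hz with rfl | rfl <;>
        simp [SimpleGraph.mem_neighborFinset, hux, huy]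
    · rw [SimpleGraph.card_neighborFinset_eq_degree, hdu, Finset.card_pair hxyne]
  have hadju : ∀ z, G.Adj u z ↔ z = x ∨ z = y := by
    intro z
    rw [← SimpleGraph.mem_neighborFinset, hNu]
    simp
  -- adjacency in delVerts
  have hdel : ∀ a b : V, (delVerts G {u}).Adj a b ↔ G.Adj a b ∧ a ≠ u ∧ b ≠ u := by
    intro a b
    constructor
    · rintro ⟨h1, h2, h3⟩
      exact ⟨h1, h2, h3⟩
    · rintro ⟨h1, h2, h3⟩
      exact ⟨h1, h2, h3⟩
  have hφxy : φ x ≠ φ y := hφ.1 ((hdel x y).2 ⟨hxy, hxu, hyu⟩)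
  refine ⟨?_, ?_, ?_⟩
  · -- list membership
    intro v
    by_cases hv : v = u
    · subst hv; rw [hupdu]; exact hcL
    · rw [hupd v hv]; exact hφL v hv
  · -- properness
    intro a b hab
    by_cases ha : a = u
    · subst ha
      have hb := (hadju b).1 hab
      rw [hupdu]
      rcases hb with rfl | rfl
      · rw [hupd b hxu]; exact hcx
      · rw [hupd b hyu]; exact hcy
    · by_cases hb : b = u
      · subst hb
        have ha' := (hadju a).1 hab.symm
        rw [hupdu]
        rcases ha' with rfl | rfl
        · rw [hupd a hxu]; exact fun h => hcx h.symm
        · rw [hupd a hyu]; exact fun h => hcy h.symm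
      · rw [hupd a ha, hupd b hb]
        exact hφ.1 ((hdel a b).2 ⟨hab, ha, hb⟩)
  · -- conflict-free
    intro v hv
    by_cases hvu : v = u
    · subst hvu
      refine ⟨φ x, x, ⟨hux, hupd x hxu ▸ rfl⟩, ?_⟩
      rintro w ⟨hw1, hw2⟩
      rcases (hadju w).1 hw1 with rfl | rfl
      · rfl
      · rw [hupd w hyu] at hw2
        exact absurd hw2 hφxy.symm
    · by_cases hvx : v = x
      · subst hvx
        obtain ⟨α, hα, hαc⟩ := hax
        obtain ⟨w₀, ⟨hw₀a, hw₀c⟩, hw₀u⟩ := hα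
        refine ⟨α, w₀, ⟨((hdel _ _).1 hw₀a).1, ?_⟩, ?_⟩
        · rw [hupd w₀ ((hdel _ _).1 hw₀a).2.2]; exact hw₀c
        · rintro w ⟨hw1, hw2⟩
          by_cases hwu : w = u
          · subst hwu
            rw [hupdu] at hw2
            exact absurd hw2.symm hαc
          · rw [hupd w hwu] at hw2
            exact hw₀u w ⟨(hdel _ _).2 ⟨hw1, hxu, hwu⟩, hw2⟩
      · by_cases hvy : v = y
        · subst hvy
          obtain ⟨β, hβ, hβc⟩ := hay
          obtain ⟨w₀, ⟨hw₀a, hw₀c⟩, hw₀u⟩ := hβ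
          refine ⟨β, w₀, ⟨((hdel _ _).1 hw₀a).1, ?_⟩, ?_⟩
          · rw [hupd w₀ ((hdel _ _).1 hw₀a).2.2]; exact hw₀c
          · rintro w ⟨hw1, hw2⟩
            by_cases hwu : w = u
            · subst hwu
              rw [hupdu] at hw2
              exact absurd hw2.symm hβc
            · rw [hupd w hwu] at hw2
              exact hw₀u w ⟨(hdel _ _).2 ⟨hw1, hyu, hwu⟩, hw2⟩
        · -- v ≠ u, x, y : v not adjacent to u
          have hvnadj : ¬ G.Adj v u := by
            intro h
            rcases (hadju v).1 h.symm with rfl | rfl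
            · exact hvx rfl
            · exact hvy rfl
          obtain ⟨w, hw⟩ := hv
          have hwu : w ≠ u := fun h => hvnadj (h ▸ hw)
          obtain ⟨c', w₁, ⟨hw₁a, hw₁c⟩, hw₁u⟩ :=
            hφ.2 v ⟨w, (hdel _ _).2 ⟨hw, hvu, hwu⟩⟩
          refine ⟨c', w₁, ⟨((hdel _ _).1 hw₁a).1, ?_⟩, ?_⟩
          · rw [hupd w₁ ((hdel _ _).1 hw₁a).2.2]; exact hw₁c
          · rintro w' ⟨hw'1, hw'2⟩
            have hw'u : w' ≠ u := fun h => hvnadj (h ▸ hw'1)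
            rw [hupd w' hw'u] at hw'2
            exact hw₁u w' ⟨(hdel _ _).2 ⟨hw'1, hvu, hw'u⟩, hw'2⟩

lemma pick_avoid (L B : Finset ℕ) (h : B.card < L.card) : ∃ c ∈ L, c ∉ B := by
  by_contra hcon
  push_neg at hcon
  exact absurd (Finset.card_le_card hcon) (by omega)

lemma card3_le (a b c : ℕ) : ({a, b, c} : Finset ℕ).card ≤ 3 := by
  apply le_trans (Finset.card_insert_le _ _)
  apply Nat.succ_le_succ
  apply le_trans (Finset.card_insert_le _ _)
  simp

lemma card4_le (a b c d : ℕ) : ({a, b, c, d} : Finset ℕ).card ≤ 4 := by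
  apply le_trans (Finset.card_insert_le _ _)
  exact Nat.succ_le_succ (card3_le b c d)


/-- A triangle `u–x–y` with `d(u) = 2`: a PCF coloring `φ` of `G - u` extends to `G`
by coloring only `u`, provided one of the following holds: `x` or `y` has at least 3
uniquely-occurring colors in `G - u`, or `|L(u)| > 4`, or `L(u)` is not the set
`{φ(x), φ(y), α, β}` where `α`, `β` are the unique once-appearing colors at `x`, `y`. -/
theorem stmt11 {V : Type*} [Fintype V] [DecidableEq V] (G : SimpleGraph V)
    [DecidableRel G.Adj] (u x y : V) (L : V → Finset ℕ) (φ : V → ℕ)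
    (hux : G.Adj u x) (huy : G.Adj u y) (hxy : G.Adj x y)
    (hdu : G.degree u = 2)
    (hL : ∀ z, (L z).card = G.degree z + 2)
    (hφ : IsPCF (delVerts G {u}) φ)
    (hφL : ∀ z, z ≠ u → φ z ∈ L z)
    (hxiso : ∃ z, (delVerts G {u}).Adj x z)
    (hyiso : ∃ z, (delVerts G {u}).Adj y z)
    (hcase :
      (∃ a b c : ℕ, a ≠ b ∧ a ≠ c ∧ b ≠ c ∧
        a ∈ Uset (delVerts G {u}) φ x ∧ b ∈ Uset (delVerts G {u}) φ x ∧
        c ∈ Uset (delVerts G {u}) φ x) ∨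
      (∃ a b c : ℕ, a ≠ b ∧ a ≠ c ∧ b ≠ c ∧
        a ∈ Uset (delVerts G {u}) φ y ∧ b ∈ Uset (delVerts G {u}) φ y ∧
        c ∈ Uset (delVerts G {u}) φ y) ∨
      4 < (L u).card ∨
      ¬ (∃ α β : ℕ,
          Uset (delVerts G {u}) φ x = {α} ∧
          Uset (delVerts G {u}) φ y = {β} ∧
          L u = {φ x, φ y, α, β})) :
    ∃ c ∈ L u, IsPCFList G L (Function.update φ u c) := by
  have hLu : (L u).card = 4 := by rw [hL u, hdu]
  obtain ⟨α₀, hα₀⟩ : ∃ α, α ∈ Uset (delVerts G {u}) φ x := hφ.2 x hxiso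
  obtain ⟨β₀, hβ₀⟩ : ∃ β, β ∈ Uset (delVerts G {u}) φ y := hφ.2 y hyiso
  by_cases h2x : ∃ a b : ℕ, a ≠ b ∧ a ∈ Uset (delVerts G {u}) φ x ∧
      b ∈ Uset (delVerts G {u}) φ x
  · by_cases h2y : ∃ a b : ℕ, a ≠ b ∧ a ∈ Uset (delVerts G {u}) φ y ∧
        b ∈ Uset (delVerts G {u}) φ y
    · obtain ⟨c, hcL, hc⟩ := pick_avoid (L u) {φ x, φ y}
        (by have := Finset.card_insert_le (φ x) ({φ y} : Finset ℕ); simp at this; omega)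
      simp only [Finset.mem_insert, Finset.mem_singleton, not_or] at hc
      refine ⟨c, hcL, extend_pcf G u x y L φ hux huy hxy hdu hφ hφL c hcL hc.1 hc.2 ?_ ?_⟩
      · obtain ⟨a, b, hab, ha, hb⟩ := h2x
        rcases eq_or_ne a c with rfl | hac
        · exact ⟨b, hb, fun h => hab h.symm⟩
        · exact ⟨a, ha, hac⟩
      · obtain ⟨a, b, hab, ha, hb⟩ := h2y
        rcases eq_or_ne a c with rfl | hac
        · exact ⟨b, hb, fun h => hab h.symm⟩
        · exact ⟨a, ha, hac⟩
    · obtain ⟨c, hcL, hc⟩ := pick_avoid (L u) {φ x, φ y, β₀}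
        (by have := card3_le (φ x) (φ y) β₀; omega)
      simp only [Finset.mem_insert, Finset.mem_singleton, not_or] at hc
      refine ⟨c, hcL, extend_pcf G u x y L φ hux huy hxy hdu hφ hφL c hcL hc.1 hc.2.1 ?_ ?_⟩
      · obtain ⟨a, b, hab, ha, hb⟩ := h2x
        rcases eq_or_ne a c with rfl | hac
        · exact ⟨b, hb, fun h => hab h.symm⟩
        · exact ⟨a, ha, hac⟩
      · exact ⟨β₀, hβ₀, fun h => hc.2.2 h.symm⟩
  · by_cases h2y : ∃ a b : ℕ, a ≠ b ∧ a ∈ Uset (delVerts G {u}) φ y ∧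
        b ∈ Uset (delVerts G {u}) φ y
    · obtain ⟨c, hcL, hc⟩ := pick_avoid (L u) {φ x, φ y, α₀}
        (by have := card3_le (φ x) (φ y) α₀; omega)
      simp only [Finset.mem_insert, Finset.mem_singleton, not_or] at hc
      refine ⟨c, hcL, extend_pcf G u x y L φ hux huy hxy hdu hφ hφL c hcL hc.1 hc.2.1 ?_ ?_⟩
      · exact ⟨α₀, hα₀, fun h => hc.2.2 h.symm⟩
      · obtain ⟨a, b, hab, ha, hb⟩ := h2y
        rcases eq_or_ne a c with rfl | hac
        · exact ⟨b, hb, fun h => hab h.symm⟩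
        · exact ⟨a, ha, hac⟩
    · -- both singletons
      have hUx : Uset (delVerts G {u}) φ x = {α₀} := by
        apply Set.eq_singleton_iff_unique_mem.2
        refine ⟨hα₀, fun b hb => ?_⟩
        by_contra hne
        exact h2x ⟨b, α₀, hne, hb, hα₀⟩
      have hUy : Uset (delVerts G {u}) φ y = {β₀} := by
        apply Set.eq_singleton_iff_unique_mem.2
        refine ⟨hβ₀, fun b hb => ?_⟩
        by_contra hne
        exact h2y ⟨b, β₀, hne, hb, hβ₀⟩
      have hne : L u ≠ ({φ x, φ y, α₀, β₀} : Finset ℕ) := by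
        rcases hcase with h | h | h | h
        · obtain ⟨a, b, c, hab, -, -, ha, hb, -⟩ := h
          rw [hUx, Set.mem_singleton_iff] at ha hb
          exact absurd (ha.trans hb.symm) hab
        · obtain ⟨a, b, c, hab, -, -, ha, hb, -⟩ := h
          rw [hUy, Set.mem_singleton_iff] at ha hb
          exact absurd (ha.trans hb.symm) hab
        · omega
        · exact fun heq => h ⟨α₀, β₀, hUx, hUy, heq⟩
      obtain ⟨c, hcL, hc⟩ :
          ∃ c ∈ L u, c ∉ ({φ x, φ y, α₀, β₀} : Finset ℕ) := by
        by_contra hcon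
        push_neg at hcon
        have hcard : ({φ x, φ y, α₀, β₀} : Finset ℕ).card ≤ (L u).card := by
          rw [hLu]; exact card4_le _ _ _ _
        exact hne (Finset.eq_of_subset_of_card_le hcon hcard)
      simp only [Finset.mem_insert, Finset.mem_singleton, not_or] at hc
      refine ⟨c, hcL, extend_pcf G u x y L φ hux huy hxy hdu hφ hφL c hcL hc.1 hc.2.1 ?_ ?_⟩
      · exact ⟨α₀, hα₀, fun h => hc.2.2.1 h.symm⟩
      · exact ⟨β₀, hβ₀, fun h => hc.2.2.2 h.symm⟩
end

section
/- Let G be a graph of maximum degree at most 4 containing a path x–u–v–y with d(u) = d(v) = 3 and with additional edges uy and xv (so u and v are each adjacent to both x and y). Let L be a list assignment with |L(z)| = d(z) + 2 for all z, and suppose G − v has a proper conflict-free L-coloring φ with φ(x) ≠ φ(y). If L(v) ≠ {φ(x), φ(y), φ(u), α, β}, where α ∈ U_φ(x, G−v) and β ∈ U_φ(y, G−v), then φ extends to G by coloring v with a color outside this 5-element set. -/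
/-- Configuration `T₁₄`: a path `x–u–v–y` with `d(u) = d(v) = 3` and additional edges
`u–y`, `x–v`, in a graph of maximum degree at most 4. A PCF coloring `φ` of `G - v`
with `φ(x) ≠ φ(y)` extends by coloring `v` outside `{φ(x), φ(y), φ(u), α, β}`,
whenever `L(v)` is not equal to that 5-element set, where `α` (resp. `β`) is a
uniquely-occurring color at `x` (resp. `y`) in `G - v`. -/
theorem stmt18 {V : Type*} [Fintype V] [DecidableEq V] (G : SimpleGraph V)
    [DecidableRel G.Adj] (x u v y : V) (L : V → Finset ℕ) (φ : V → ℕ)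
    (hΔ : G.maxDegree ≤ 4)
    (hxu : G.Adj x u) (huv : G.Adj u v) (hvy : G.Adj v y)
    (huy : G.Adj u y) (hxv : G.Adj x v) (hxy : x ≠ y)
    (hdu : G.degree u = 3) (hdv : G.degree v = 3)
    (hL : ∀ z, (L z).card = G.degree z + 2)
    (hφ : IsPCF (delVerts G {v}) φ)
    (hφL : ∀ z, z ≠ v → φ z ∈ L z)
    (hne : φ x ≠ φ y) :
    ∀ α β : ℕ, α ∈ Uset (delVerts G {v}) φ x → β ∈ Uset (delVerts G {v}) φ y →
      L v ≠ {φ x, φ y, φ u, α, β} →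
      ∃ c ∈ L v, c ∉ ({φ x, φ y, φ u, α, β} : Finset ℕ) ∧
        IsPCFList G L (Function.update φ v c) := by
  intro α β hα hβ hLne
  classical
  have hxu' : x ≠ u := G.ne_of_adj hxu
  have huv' : u ≠ v := G.ne_of_adj huv
  have hvy' : v ≠ y := G.ne_of_adj hvy
  have huy' : u ≠ y := G.ne_of_adj huy
  have hxv' : x ≠ v := G.ne_of_adj hxv
  have hNv : G.neighborFinset v = {x, u, y} := by
    refine (Finset.eq_of_subset_of_card_le ?_ ?_).symm
    · intro z hz
      simp only [Finset.mem_insert, Finset.mem_singleton] at hz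
      rcases hz with rfl | rfl | rfl
      · simpa using hxv.symm
      · simpa using huv.symm
      · simpa using hvy
    · rw [SimpleGraph.card_neighborFinset_eq_degree, hdv]
      have h3 : ({x, u, y} : Finset V).card = 3 := by
        rw [Finset.card_insert_of_notMem (by simp [hxu', hxy]),
            Finset.card_insert_of_notMem (by simp [huy']), Finset.card_singleton]
      omega
  have hNu : G.neighborFinset u = {x, v, y} := by
    refine (Finset.eq_of_subset_of_card_le ?_ ?_).symm
    · intro z hz
      simp only [Finset.mem_insert, Finset.mem_singleton] at hz
      rcases hz with rfl | rfl | rfl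
      · simpa using hxu.symm
      · simpa using huv
      · simpa using huy
    · rw [SimpleGraph.card_neighborFinset_eq_degree, hdu]
      have h3 : ({x, v, y} : Finset V).card = 3 := by
        rw [Finset.card_insert_of_notMem (by simp [hxv', hxy]),
            Finset.card_insert_of_notMem (by simp [hvy']), Finset.card_singleton]
      omega
  have hAdjV : ∀ z, G.Adj v z → z = x ∨ z = u ∨ z = y := by
    intro z hz
    have : z ∈ G.neighborFinset v := by simpa using hz
    rw [hNv] at this
    simpa using this
  have hAdjU : ∀ z, G.Adj u z → z = x ∨ z = v ∨ z = y := by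
    intro z hz
    have : z ∈ G.neighborFinset u := by simpa using hz
    rw [hNu] at this
    simpa using this
  have hcard : (L v).card = 5 := by rw [hL v, hdv]
  have hex : ∃ c ∈ L v, c ∉ ({φ x, φ y, φ u, α, β} : Finset ℕ) := by
    by_contra h
    push_neg at h
    have hsub : L v ⊆ {φ x, φ y, φ u, α, β} := fun c hc => h c hc
    have hSc : ({φ x, φ y, φ u, α, β} : Finset ℕ).card ≤ 5 := by
      refine le_trans (Finset.card_insert_le _ _) ?_
      refine Nat.succ_le_succ (le_trans (Finset.card_insert_le _ _) ?_)
      refine Nat.succ_le_succ (le_trans (Finset.card_insert_le _ _) ?_)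
      exact Nat.succ_le_succ (le_trans (Finset.card_insert_le _ _) (by simp))
    exact hLne (Finset.eq_of_subset_of_card_le hsub (by omega))
  obtain ⟨c, hcL, hcS⟩ := hex
  have hcx : c ≠ φ x := by intro h; exact hcS (by simp [h])
  have hcy : c ≠ φ y := by intro h; exact hcS (by simp [h])
  have hcu : c ≠ φ u := by intro h; exact hcS (by simp [h])
  have hcα : c ≠ α := by intro h; exact hcS (by simp [h])
  have hcβ : c ≠ β := by intro h; exact hcS (by simp [h])
  have hψv : Function.update φ v c v = c := Function.update_self v c φ
  have hψz : ∀ z, z ≠ v → Function.update φ v c z = φ z :=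
    fun z hz => Function.update_of_ne hz c φ
  refine ⟨c, hcL, hcS, ?_, ?_, ?_⟩
  · -- lists
    intro z
    by_cases hz : z = v
    · rw [hz, hψv]; exact hcL
    · rw [hψz z hz]; exact hφL z hz
  · -- proper
    intro a b hab
    by_cases ha : a = v
    · rw [ha, hψv, hψz b (by rw [ha] at hab; exact (G.ne_of_adj hab).symm)]
      rw [ha] at hab
      rcases hAdjV b hab with hb | hb | hb
      · rw [hb]; exact hcx
      · rw [hb]; exact hcu
      · rw [hb]; exact hcy
    · by_cases hb : b = v
      · rw [hb, hψv, hψz a ha]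
        rw [hb] at hab
        rcases hAdjV a hab.symm with h | h | h
        · rw [h]; exact fun h' => hcx h'.symm
        · rw [h]; exact fun h' => hcu h'.symm
        · rw [h]; exact fun h' => hcy h'.symm
      · rw [hψz a ha, hψz b hb]
        exact hφ.1 ⟨hab, ha, hb⟩
  · -- conflict-free
    intro w hw
    by_cases hwv : w = v
    · rw [hwv]
      by_cases hux : φ u = φ x
      · refine ⟨φ y, y, ⟨hvy, hψz y hvy'.symm⟩, ?_⟩
        rintro z ⟨hz, hzc⟩
        rcases hAdjV z hz with h | h | h
        · rw [h, hψz x hxv'] at hzc; exact absurd hzc hne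
        · rw [h, hψz u huv', hux] at hzc; exact absurd hzc hne
        · exact h
      · refine ⟨φ x, x, ⟨hxv.symm, hψz x hxv'⟩, ?_⟩
        rintro z ⟨hz, hzc⟩
        rcases hAdjV z hz with h | h | h
        · exact h
        · rw [h, hψz u huv'] at hzc; exact absurd hzc hux
        · rw [h, hψz y hvy'.symm] at hzc; exact absurd hzc hne.symm
    · by_cases hwadj : G.Adj v w
      · rcases hAdjV w hwadj with hwx | hwu | hwy
        · -- w = x : use α
          obtain ⟨w₀, ⟨⟨hadj, _, hw₀v⟩, hcol⟩, huniq⟩ := hα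
          simp only [Set.mem_singleton_iff] at hw₀v
          rw [hwx]
          refine ⟨α, w₀, ⟨hadj, by rw [hψz w₀ hw₀v]; exact hcol⟩, ?_⟩
          rintro z ⟨hz, hzc⟩
          by_cases hzv : z = v
          · rw [hzv, hψv] at hzc; exact absurd hzc hcα
          · rw [hψz z hzv] at hzc
            exact huniq z ⟨⟨hz, by simpa using hxv', by simpa using hzv⟩, hzc⟩
        · -- w = u : use c, witness v
          rw [hwu]
          refine ⟨c, v, ⟨huv, hψv⟩, ?_⟩
          rintro z ⟨hz, hzc⟩
          rcases hAdjU z hz with h | h | h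
          · rw [h, hψz x hxv'] at hzc; exact absurd hzc.symm hcx
          · exact h
          · rw [h, hψz y hvy'.symm] at hzc; exact absurd hzc.symm hcy
        · -- w = y : use β
          obtain ⟨w₀, ⟨⟨hadj, _, hw₀v⟩, hcol⟩, huniq⟩ := hβ
          simp only [Set.mem_singleton_iff] at hw₀v
          rw [hwy]
          refine ⟨β, w₀, ⟨hadj, by rw [hψz w₀ hw₀v]; exact hcol⟩, ?_⟩
          rintro z ⟨hz, hzc⟩
          by_cases hzv : z = v
          · rw [hzv, hψv] at hzc; exact absurd hzc hcβ
          · rw [hψz z hzv] at hzc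
            exact huniq z ⟨⟨hz, by simpa using hvy'.symm, by simpa using hzv⟩, hzc⟩
      · -- w not adjacent to v and w ≠ v
        obtain ⟨w₁, hw₁⟩ := hw
        have hw₁v : w₁ ≠ v := fun h => hwadj (h ▸ hw₁).symm
        obtain ⟨c', w₀, ⟨⟨hadj, _, hw₀v⟩, hcol⟩, huniq⟩ :=
          hφ.2 w ⟨w₁, hw₁, by simpa using hwv, by simpa using hw₁v⟩
        simp only [Set.mem_singleton_iff] at hw₀v
        refine ⟨c', w₀, ⟨hadj, by rw [hψz w₀ hw₀v]; exact hcol⟩, ?_⟩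
        rintro z ⟨hz, hzc⟩
        have hzv : z ≠ v := fun h => hwadj (h ▸ hz).symm
        rw [hψz z hzv] at hzc
        exact huniq z ⟨⟨hz, by simpa using hwv, by simpa using hzv⟩, hzc⟩
end
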